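/- Let Y be a proper metric space, let k ≥ 1, and equip ℝ^k × Y with the ℓ²-product metric (ℝ^k carrying the standard Euclidean metric). Let N be a closed subset of ℝ^k × Y which is geodesic in ℝ^k × Y and which contains a slice ℝ^k × {y} for some y ∈ Y. Then N equals ℝ^k × Z as a subset of ℝ^k × Y, where Z = { y' ∈ Y : (0, y') ∈ N }; in particular, with the restricted metric, N is the ℓ²-metric product of ℝ^k and Z. -/

import Mathlib

/-- A minimizing geodesic from `p` to `q` in a metric space: an isometric embedding of
`[0, dist p q]` sending `0` to `p` and `dist p q` to `q`. -/
def IsMinGeodesic {X : Type*} [MetricSpace X] (c : ℝ → X) (p q : X) : Prop :=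
  c 0 = p ∧ c (dist p q) = q ∧
    ∀ s ∈ Set.Icc (0 : ℝ) (dist p q), ∀ t ∈ Set.Icc (0 : ℝ) (dist p q),
      dist (c s) (c t) = |s - t|

/-- A subset `S` of a metric space `X` is geodesic in `X` if any two points of `S` are
joined by a minimal geodesic of `X` contained in `S`. -/
def IsGeodesicIn {X : Type*} [MetricSpace X] (S : Set X) : Prop :=
  ∀ p ∈ S, ∀ q ∈ S, ∃ c : ℝ → X, IsMinGeodesic c p q ∧
    ∀ t ∈ Set.Icc (0 : ℝ) (dist p q), c t ∈ S

open scoped ENNReal RealInnerProductSpace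

lemma dist_sq_l2prod {α β : Type*} [PseudoMetricSpace α] [PseudoMetricSpace β]
    (x y : WithLp 2 (α × β)) :
    dist x y ^ 2 = dist x.fst y.fst ^ 2 + dist x.snd y.snd ^ 2 := by
  rw [WithLp.prod_dist_eq_add (by norm_num)]
  have h2 : (2 : ℝ≥0∞).toReal = 2 := by norm_num
  rw [h2, ← Real.rpow_natCast _ 2, ← Real.rpow_mul (by positivity)]
  norm_num

set_option maxHeartbeats 1000000 in
lemma shift_mem {E Y : Type*} [NormedAddCommGroup E] [InnerProductSpace ℝ E]
    [MetricSpace Y]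
    {N : Set (WithLp 2 (E × Y))}
    (hclosed : IsClosed N) (hgeo : IsGeodesicIn N) {y : Y}
    (hslice : ∀ u : E, (WithLp.equiv 2 (E × Y)).symm (u, y) ∈ N)
    {u : E} {z : Y}
    (hu : (WithLp.equiv 2 (E × Y)).symm (u, z) ∈ N) (v : E) :
    (WithLp.equiv 2 (E × Y)).symm (v, z) ∈ N := by
  classical
  by_cases hv : v = u
  · subst hv; exact hu
  have hs0 : (0 : ℝ) < ‖v - u‖ := norm_pos_iff.mpr (sub_ne_zero.mpr hv)
  set s : ℝ := ‖v - u‖ with hsdef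
  set e : E := s⁻¹ • (v - u) with hedef
  have he : ‖e‖ = 1 := by
    rw [hedef, norm_smul, norm_inv, Real.norm_eq_abs, abs_of_pos hs0]
    field_simp
    exact hsdef.symm
  have hv' : v = u + s • e := by
    rw [hedef, smul_inv_smul₀ hs0.ne']
    abel
  rw [← hclosed.closure_eq, Metric.mem_closure_iff]
  intro ε hε
  set h : ℝ := dist z y with hhdef
  have hh0 : 0 ≤ h := dist_nonneg
  set t : ℝ := max s (2 * s ^ 2 * (s + h) / ε ^ 2 + 1) with htdef
  have hts : s ≤ t := le_max_left _ _
  have ht0 : 0 < t := lt_of_lt_of_le hs0 hts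
  have hKey : 2 * s ^ 2 * (s + h) / t < ε ^ 2 := by
    have hK : 0 ≤ 2 * s ^ 2 * (s + h) := by positivity
    have h1 : 2 * s ^ 2 * (s + h) / ε ^ 2 + 1 ≤ t := le_max_right _ _
    rw [div_lt_iff₀ ht0]
    nlinarith [mul_le_mul_of_nonneg_left h1 (sq_nonneg ε),
      mul_div_cancel₀ (2 * s ^ 2 * (s + h)) (by positivity : (ε:ℝ) ^ 2 ≠ 0)]
  set P : WithLp 2 (E × Y) := (WithLp.equiv 2 (E × Y)).symm (u, z) with hP
  set q : WithLp 2 (E × Y) := (WithLp.equiv 2 (E × Y)).symm (u + t • e, y) with hqdef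
  have hq : q ∈ N := hslice _
  set D : ℝ := dist P q with hD
  have hD0 : 0 ≤ D := dist_nonneg
  have hD2 : D ^ 2 = t ^ 2 + h ^ 2 := by
    rw [hD, dist_sq_l2prod]
    have h1 : dist (P.fst) (q.fst) = t := by
      show dist u (u + t • e) = t
      rw [dist_eq_norm, norm_sub_rev, add_sub_cancel_left, norm_smul, he,
        Real.norm_eq_abs, abs_of_pos ht0, mul_one]
    have h2 : dist (P.snd) (q.snd) = h := rfl
    rw [h1, h2]
  have htD : t ≤ D := by nlinarith
  obtain ⟨c, ⟨hc0, hcD, hiso⟩, hmem⟩ := hgeo P hu q hq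
  have hsIcc : s ∈ Set.Icc (0:ℝ) D := ⟨hs0.le, hts.trans htD⟩
  have h0Icc : (0:ℝ) ∈ Set.Icc (0:ℝ) D := ⟨le_refl _, hD0⟩
  have hDIcc : D ∈ Set.Icc (0:ℝ) D := ⟨hD0, le_refl _⟩
  set p : WithLp 2 (E × Y) := c s with hp
  have hpN : p ∈ N := hmem s hsIcc
  have hdPp : dist P p = s := by
    have h1 := hiso 0 h0Icc s hsIcc
    rw [hc0] at h1
    rw [← hp] at h1
    rw [h1]
    simp [abs_of_nonneg hs0.le]
  have hdpq : dist p q = D - s := by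
    have h1 := hiso s hsIcc D hDIcc
    rw [hcD, ← hp] at h1
    rw [h1, abs_of_nonpos (by linarith [hsIcc.2]), neg_sub]
  set x : E := p.fst - u with hx
  set A : ℝ := ‖x‖ ^ 2 with hA
  set B : ℝ := dist p.snd z with hB
  set C : ℝ := dist p.snd y with hC
  set I : ℝ := ⟪x, e⟫ with hI
  have hA0 : 0 ≤ A := sq_nonneg _
  have hB0 : 0 ≤ B := dist_nonneg
  have hC0 : 0 ≤ C := dist_nonneg
  have e1 : A + B ^ 2 = s ^ 2 := by
    have h3 := dist_sq_l2prod P p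
    rw [hdPp] at h3
    have h1 : dist (P.fst) (p.fst) = ‖x‖ := by
      show dist u p.fst = ‖x‖
      rw [dist_eq_norm, norm_sub_rev]
    have h2 : dist (P.snd) (p.snd) = B := by
      show dist z p.snd = B
      rw [hB, dist_comm]
    rw [h1, h2] at h3
    linarith [h3.symm]
  have e2 : A - 2 * t * I + t ^ 2 + C ^ 2 = (D - s) ^ 2 := by
    have h3 := dist_sq_l2prod p q
    rw [hdpq] at h3
    have h1 : dist (p.fst) (q.fst) ^ 2 = A - 2 * t * I + t ^ 2 := by
      show dist p.fst (u + t • e) ^ 2 = _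
      rw [dist_eq_norm]
      have h4 : p.fst - (u + t • e) = x - t • e := by rw [hx]; abel
      rw [h4, norm_sub_sq_real, real_inner_smul_right, norm_smul, he,
        Real.norm_eq_abs, abs_of_pos ht0]
      rw [← hA, ← hI]
      ring
    have h2 : dist (p.snd) (q.snd) = C := rfl
    rw [h1, h2] at h3
    linarith [h3]
  have tr1 : h ≤ B + C := by
    have h1 := dist_triangle z p.snd y
    rw [← hhdef, ← hC, dist_comm z p.snd, ← hB] at h1
    exact h1
  have tr2 : C ≤ B + h := by
    have h1 := dist_triangle p.snd z y
    rw [← hhdef, ← hC, ← hB] at h1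
    exact h1
  have hBs : B ≤ s := by nlinarith
  have hIbound : s - s * (s + h) / t ≤ I := by
    have hClow : -(s * (s + 2 * h)) ≤ C ^ 2 - h ^ 2 := by nlinarith
    have h2tI : 2 * s * t - 2 * s ^ 2 - 2 * s * h ≤ 2 * t * I := by nlinarith
    have h3 : s * (s + h) / t * t = s * (s + h) := div_mul_cancel₀ _ ht0.ne'
    have h4 : (s - s * (s + h) / t) * (2 * t) ≤ I * (2 * t) := by nlinarith
    exact le_of_mul_le_mul_right h4 (by positivity)
  refine ⟨p, hpN, ?_⟩
  have hfinal : dist ((WithLp.equiv 2 (E × Y)).symm (v, z)) p ^ 2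
      = 2 * s ^ 2 - 2 * s * I := by
    rw [dist_sq_l2prod]
    have h1 : dist (((WithLp.equiv 2 (E × Y)).symm (v, z)).fst) (p.fst) ^ 2
        = s ^ 2 - 2 * s * I + A := by
      show dist v p.fst ^ 2 = _
      rw [dist_eq_norm]
      have h4 : v - p.fst = s • e - x := by rw [hx, hv']; abel
      rw [h4, norm_sub_sq_real, real_inner_smul_left, norm_smul, he,
        Real.norm_eq_abs, abs_of_pos hs0, real_inner_comm]
      rw [← hI, ← hA]
      ring
    have h2 : dist (((WithLp.equiv 2 (E × Y)).symm (v, z)).snd) (p.snd) = B := by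
      show dist z p.snd = B
      rw [hB, dist_comm]
    rw [h1, h2]
    linarith [e1]
  have hsq : dist ((WithLp.equiv 2 (E × Y)).symm (v, z)) p ^ 2 < ε ^ 2 := by
    rw [hfinal]
    have h5 : 2 * s * (s - s * (s + h) / t) = 2 * s ^ 2 - 2 * s ^ 2 * (s + h) / t := by
      field_simp
    have h6 := mul_le_mul_of_nonneg_left hIbound (by linarith : (0:ℝ) ≤ 2 * s)
    linarith [h5 ▸ h6, hKey]
  nlinarith [dist_nonneg (x := (WithLp.equiv 2 (E × Y)).symm (v, z)) (y := p), hε, hsq]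

/-- If `N` is a closed geodesic subset of the ℓ²-product `ℝᵏ × Y` (with `Y` proper)
containing a slice `ℝᵏ × {y}`, then `N = ℝᵏ × Z` where `Z = {y' | (0, y') ∈ N}`. -/
theorem stmt_0 (k : ℕ) (hk : 1 ≤ k) (Y : Type*) [MetricSpace Y] [ProperSpace Y]
    (N : Set (WithLp 2 (EuclideanSpace ℝ (Fin k) × Y)))
    (hclosed : IsClosed N) (hgeo : IsGeodesicIn N) (y : Y)
    (hslice : ∀ u : EuclideanSpace ℝ (Fin k),
      (WithLp.equiv 2 (EuclideanSpace ℝ (Fin k) × Y)).symm (u, y) ∈ N) :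
    N = {p : WithLp 2 (EuclideanSpace ℝ (Fin k) × Y) |
      ((WithLp.equiv 2 (EuclideanSpace ℝ (Fin k) × Y)) p).2 ∈
        {y' : Y | (WithLp.equiv 2 (EuclideanSpace ℝ (Fin k) × Y)).symm (0, y') ∈ N}} := by
  ext p
  have hpeq : (WithLp.equiv 2 (EuclideanSpace ℝ (Fin k) × Y)).symm (p.fst, p.snd) = p := rfl
  constructor
  · intro hp
    exact shift_mem hclosed hgeo hslice (hpeq ▸ hp) 0
  · intro hp
    have := shift_mem hclosed hgeo hslice hp p.fst
    exact hpeq ▸ this
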